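/- The degree-zero part V[g]_0 of the graded Lie superalgebra V[g] is spanned by elements o(a) = a(wt a − 1) for homogeneous a ∈ V^{0*}, and the kernel of the linear map V^{0*} → V[g]_0, a ↦ o(a), is (L(−1) + L(0))V^{0*}; hence V[g]_0 ≅ V^{0*}/(L(−1)+L(0))V^{0*} as Lie superalgebras, with induced bracket [a,b] = Σ_{j≥0} C(wt a − 1, j) a_j b. -/

import Mathlib

open Complex DirectSum
open scoped Classical

noncomputable section

/-- Generalized binomial coefficient `x choose i` for `x : ℚ`. -/
def qchoose (x : ℚ) (i : ℕ) : ℚ := (∏ j ∈ Finset.range i, (x - j)) / (Nat.factorial i)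

/-- The super-sign `(-1)^{p(u)p(v)}` read off from the weights `p, q` of homogeneous
vectors: it is `-1` exactly when both weights are non-integral (both vectors odd). -/
def epsQ (p q : ℚ) : ℂ :=
  if (¬ ∃ a : ℤ, (a : ℚ) = p) ∧ (¬ ∃ b : ℤ, (b : ℚ) = q) then -1 else 1

/-- A vertex operator superalgebra, presented by its modes `Y u n` (for `n : ℤ`),
vacuum, conformal vector, and `½ℤ`-grading by weight spaces, together with the usual
axioms (truncation, vacuum/creation, `L(0)`-grading, `L(-1)`-translation and the
Borcherds/Jacobi identity with super-signs). -/
structure VOSA (V : Type) [AddCommGroup V] [Module ℂ V] where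
  Y : V → ℤ → Module.End ℂ V
  vac : V
  ω : V
  wtSpace : ℚ → Submodule ℂ V
  halfInt : ∀ n : ℚ, wtSpace n ≠ ⊥ → ∃ m : ℤ, n = (m : ℚ) / 2
  lowerBound : ∃ N : ℚ, ∀ n < N, wtSpace n = ⊥
  grading : DirectSum.IsInternal wtSpace
  fin_dim : ∀ n : ℚ, FiniteDimensional ℂ (wtSpace n)
  trunc : ∀ u v : V, ∃ N : ℤ, ∀ n ≥ N, Y u n v = 0
  vacuum_op : ∀ n : ℤ, Y vac n = if n = -1 then LinearMap.id else 0
  creation : ∀ v : V, Y v (-1) vac = v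
  creation' : ∀ (v : V) (n : ℤ), 0 ≤ n → Y v n vac = 0
  omega_wt : ω ∈ wtSpace 2
  vac_wt : vac ∈ wtSpace 0
  L0_grading : ∀ (p : ℚ) (v : V), v ∈ wtSpace p → Y ω 1 v = (p : ℂ) • v
  translation : ∀ (u : V) (n : ℤ), Y (Y ω 0 u) n = (-(n : ℂ)) • Y u (n - 1)
  mode_wt : ∀ (p q : ℚ) (u v : V) (n : ℤ), u ∈ wtSpace p → v ∈ wtSpace q →
    Y u n v ∈ wtSpace (p + q - n - 1)
  borcherds : ∀ (p q : ℚ) (u v w : V), u ∈ wtSpace p → v ∈ wtSpace q →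
    ∀ m n k : ℤ,
      ∑ᶠ i : ℕ, ((qchoose (m : ℚ) i : ℚ) : ℂ) • Y (Y u (k + (i : ℤ)) v) (m + n - (i : ℤ)) w =
      ∑ᶠ i : ℕ, ((-1 : ℂ) ^ i * ((qchoose (k : ℚ) i : ℚ) : ℂ)) •
        (Y u (m + k - (i : ℤ)) (Y v (n + (i : ℤ)) w)
          - ((-1 : ℂ) ^ k * epsQ p q) • Y v (k + n - (i : ℤ)) (Y u (m + (i : ℤ)) w))

variable {V : Type} [AddCommGroup V] [Module ℂ V]

namespace VOSA

/-- The even part `V_{\bar 0} = ⊕_{n ∈ ℤ} V_n`. -/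
def evenPart (A : VOSA V) : Submodule ℂ V := ⨆ n : ℤ, A.wtSpace (n : ℚ)

/-- The odd part `V_{\bar 1} = ⊕_{n ∈ ½+ℤ} V_n`. -/
def oddPart (A : VOSA V) : Submodule ℂ V := ⨆ n : ℤ, A.wtSpace ((n : ℚ) + 1/2)

/-- `L(0) = ω_1`. -/
def L0 (A : VOSA V) : Module.End ℂ V := A.Y A.ω 1

/-- `L(-1) = ω_0`. -/
def Lm1 (A : VOSA V) : Module.End ℂ V := A.Y A.ω 0

/-- An automorphism of a vertex operator superalgebra: a linear automorphism
preserving `ω` and compatible with all vertex operator modes. -/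
structure Aut (A : VOSA V) where
  g : V ≃ₗ[ℂ] V
  fix_omega : g A.ω = A.ω
  equivariant : ∀ (u : V) (n : ℤ) (v : V), g (A.Y u n v) = A.Y (g u) n (g v)

/-- The canonical parity involution property: identity on the even part,
minus identity on the odd part. -/
def IsParityAut (A : VOSA V) (s : Aut A) : Prop :=
  (∀ v ∈ A.evenPart, s.g v = v) ∧ (∀ v ∈ A.oddPart, s.g v = -v)

end VOSA

/-- The `e^{2πir/T}`-eigenspace of a linear automorphism. -/
def eigSp (f : V ≃ₗ[ℂ] V) (T r : ℕ) : Submodule ℂ V :=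
  Module.End.eigenspace (f.toLinearMap) (Complex.exp (2 * Real.pi * Complex.I * r / T))

def deltaR (r : ℕ) : ℚ := if r = 0 then 1 else 0

/-- `u ∘_g v = Res_z (1+z)^{wt u - 1 + δ_r + r/T} z^{-1-δ_r} Y(u,z)v`, in mode form,
for `u` homogeneous of weight `p` lying in the `gσ`-eigenspace with index `r`. -/
def circGElem (A : VOSA V) (T r : ℕ) (p : ℚ) (u v : V) : V :=
  ∑ᶠ i : ℕ, ((qchoose (p - 1 + deltaR r + (r : ℚ) / T) i : ℚ) : ℂ) •
    A.Y u ((i : ℤ) - 1 - (if r = 0 then 1 else 0)) v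

/-- `O_g(V)`: the span of all `u ∘_g v`. -/
def Og (A : VOSA V) (gs : V ≃ₗ[ℂ] V) (T : ℕ) : Submodule ℂ V :=
  Submodule.span ℂ {x | ∃ (r : ℕ) (p : ℚ) (u v : V), r < T ∧
    u ∈ eigSp gs T r ∧ u ∈ A.wtSpace p ∧ x = circGElem A T r p u v}

/-- `u * v = Res_z (1+z)^{wt u} z^{-1} Y(u,z)v` for `u` homogeneous of weight `p`. -/
def starElem (A : VOSA V) (p : ℚ) (u v : V) : V :=
  ∑ᶠ i : ℕ, ((qchoose p i : ℚ) : ℂ) • A.Y u ((i : ℤ) - 1) v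

/-- `u ∘ v = Res_z (1+z)^{wt u} z^{-2} Y(u,z)v` for `u` homogeneous of weight `p`. -/
def circElem (A : VOSA V) (p : ℚ) (u v : V) : V :=
  ∑ᶠ i : ℕ, ((qchoose p i : ℚ) : ℂ) • A.Y u ((i : ℤ) - 2) v

/-- `O(S)` for a subalgebra `S` (e.g. `V^{0*}`): span of `a ∘ b`, `a, b ∈ S`. -/
def Osub (A : VOSA V) (S : Submodule ℂ V) : Submodule ℂ V :=
  Submodule.span ℂ {x | ∃ (p : ℚ) (u v : V), u ∈ S ∧ u ∈ A.wtSpace p ∧ v ∈ S ∧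
    x = circElem A p u v}

/-- The projection of `V` onto the weight-`p` subspace coming from the internal
direct sum decomposition `V = ⊕ V_n`. -/
def projWt (A : VOSA V) (p : ℚ) : V →ₗ[ℂ] V :=
  (A.wtSpace p).subtype ∘ₗ (DirectSum.component ℂ ℚ (fun q => ↥(A.wtSpace q)) p) ∘ₗ
    (LinearEquiv.ofBijective (DirectSum.coeLinearMap A.wtSpace) A.grading).symm.toLinearMap

/-- A weak `g`-twisted module over a vertex operator superalgebra `A`, where `g`
has order `T₀`: modes `YM u n` for `n : ℚ`, supported on `r/T₀ + ℤ` for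
`u ∈ V^r`, with truncation, vacuum and the twisted Borcherds/Jacobi identity. -/
structure TwMod (A : VOSA V) (g : VOSA.Aut A) (T₀ : ℕ) (M : Type)
    [AddCommGroup M] [Module ℂ M] where
  YM : V → ℚ → M →ₗ[ℂ] M
  supp : ∀ (r : ℕ), r < T₀ → ∀ u ∈ eigSp g.g T₀ r, ∀ n : ℚ,
    (¬ ∃ m : ℤ, n = (m : ℚ) + (r : ℚ) / T₀) → YM u n = 0
  trunc : ∀ (u : V) (w : M), ∃ N : ℚ, ∀ n ≥ N, YM u n w = 0
  vac_act : ∀ n : ℚ, YM A.vac n = if n = -1 then LinearMap.id else 0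
  tw_borcherds : ∀ (r : ℕ) (p q : ℚ) (u v : V) (w : M),
    u ∈ eigSp g.g T₀ r → u ∈ A.wtSpace p → v ∈ A.wtSpace q →
    ∀ (m n : ℚ) (k : ℤ), (∃ a : ℤ, m = (a : ℚ) + (r : ℚ) / T₀) →
      ∑ᶠ i : ℕ, ((qchoose m i : ℚ) : ℂ) • YM (A.Y u (k + (i : ℤ)) v) (m + n - (i : ℚ)) w =
      ∑ᶠ i : ℕ, ((-1 : ℂ) ^ i * ((qchoose (k : ℚ) i : ℚ) : ℂ)) •
        (YM u (m + (k : ℚ) - (i : ℚ)) (YM v (n + (i : ℚ)) w)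
          - ((-1 : ℂ) ^ k * epsQ p q) • YM v ((k : ℚ) + n - (i : ℚ)) (YM u (m + (i : ℚ)) w))

/-- The space of lowest weight vectors
`Ω(M) = {w : u_{wt u + n} w = 0 for all homogeneous u and n ≥ 0}`. -/
def OmegaSet (A : VOSA V) {g : VOSA.Aut A} {T₀ : ℕ} {M : Type}
    [AddCommGroup M] [Module ℂ M] (W : TwMod A g T₀ M) : Set M :=
  {w | ∀ (p : ℚ) (u : V), u ∈ A.wtSpace p → ∀ m : ℚ, p ≤ m → W.YM u m w = 0}

/-- The zero-mode `o(a) = a_{wt a - 1}`, extended linearly to all of `V`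
via the projections to homogeneous components. -/
def oMode (A : VOSA V) {g : VOSA.Aut A} {T₀ : ℕ} {M : Type}
    [AddCommGroup M] [Module ℂ M] (W : TwMod A g T₀ M) (a : V) (w : M) : M :=
  ∑ᶠ p : ℚ, W.YM (projWt A p a) (p - 1) w

/-- An admissible `g`-twisted module: a weak `g`-twisted module with a
`(1/T)ℤ₊`-grading compatible with the mode actions. -/
structure AdmTwMod (A : VOSA V) (g : VOSA.Aut A) (T₀ T : ℕ) (M : Type)
    [AddCommGroup M] [Module ℂ M] extends TwMod A g T₀ M where
  gr : ℚ → Submodule ℂ M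
  gr_internal : DirectSum.IsInternal gr
  gr_supp : ∀ n : ℚ, gr n ≠ ⊥ → ∃ a : ℕ, n = (a : ℚ) / T
  gr_compat : ∀ (p : ℚ) (v : V), v ∈ A.wtSpace p → ∀ (m n : ℚ) (w : M),
    w ∈ gr n → YM v m w ∈ gr (n + p - m - 1)

/-- A submodule invariant under all twisted modes. -/
def TwMod.Invariant {A : VOSA V} {g : VOSA.Aut A} {T₀ : ℕ} {M : Type}
    [AddCommGroup M] [Module ℂ M] (W : TwMod A g T₀ M) (N : Submodule ℂ M) : Prop :=
  ∀ (u : V) (m : ℚ), ∀ w ∈ N, W.YM u m w ∈ N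

/-- A graded submodule: one which is the sum of its graded pieces. -/
def AdmTwMod.IsGraded {A : VOSA V} {g : VOSA.Aut A} {T₀ T : ℕ} {M : Type}
    [AddCommGroup M] [Module ℂ M] (W : AdmTwMod A g T₀ T M) (N : Submodule ℂ M) : Prop :=
  N = ⨆ n : ℚ, N ⊓ W.gr n

/-- A simple admissible twisted module: nonzero, and `0`, `M` are the only
graded invariant submodules. -/
def AdmTwMod.IsSimple {A : VOSA V} {g : VOSA.Aut A} {T₀ T : ℕ} {M : Type}
    [AddCommGroup M] [Module ℂ M] (W : AdmTwMod A g T₀ T M) : Prop :=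
  (⊥ : Submodule ℂ M) ≠ ⊤ ∧
  ∀ N : Submodule ℂ M, W.toTwMod.Invariant N → W.IsGraded N → N = ⊥ ∨ N = ⊤

/-- An isomorphism of twisted modules. -/
structure TwIso {A : VOSA V} {g : VOSA.Aut A} {T₀ T : ℕ} {M N : Type}
    [AddCommGroup M] [Module ℂ M] [AddCommGroup N] [Module ℂ N]
    (W : AdmTwMod A g T₀ T M) (X : AdmTwMod A g T₀ T N) where
  e : M ≃ₗ[ℂ] N
  comm : ∀ (u : V) (n : ℚ) (w : M), e (W.YM u n w) = X.YM u n (e w)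

/-- A bundled admissible `g`-twisted module. -/
structure AdmBundle (A : VOSA V) (g : VOSA.Aut A) (T₀ T : ℕ) where
  M : Type
  [acg : AddCommGroup M]
  [mod : Module ℂ M]
  str : AdmTwMod A g T₀ T M

attribute [instance] AdmBundle.acg AdmBundle.mod

/-- The space `L(V,g) ⊂ ℂ[t^{1/T₀},t^{-1/T₀}] ⊗ V`, modelled as finitely supported
functions `ℚ →₀ V`: the component at `n + r/T₀` must lie in `V^r`. -/
def LVgSet (A : VOSA V) (g : VOSA.Aut A) (T₀ : ℕ) : Set (ℚ →₀ V) :=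
  {f | ∀ m : ℚ, f m ≠ 0 → ∃ (a : ℤ) (r : ℕ), r < T₀ ∧ m = (a : ℚ) + (r : ℚ) / T₀ ∧
    f m ∈ eigSp g.g T₀ r}

/-- The operator `D = d/dt ⊗ 1 + 1 ⊗ L(-1)` on `ℂ[t^{1/T₀},t^{-1/T₀}] ⊗ V`,
sending `t^q ⊗ a` to `q t^{q-1} ⊗ a + t^q ⊗ L(-1)a`. -/
def Dop (A : VOSA V) (f : ℚ →₀ V) : ℚ →₀ V :=
  f.sum fun q a => (q : ℂ) • Finsupp.single (q - 1) a + Finsupp.single q (A.Y A.ω 0 a)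

/-- The subspace `D L(V,g)` (its span). -/
def DLsub (A : VOSA V) (g : VOSA.Aut A) (T₀ : ℕ) : Submodule ℂ (ℚ →₀ V) :=
  Submodule.span ℂ (Dop A '' LVgSet A g T₀)

/-- The `0`-th product on `L(V)`: `(t^q ⊗ a)_0 (t^{q'} ⊗ b) = Σ_i C(q,i) t^{q+q'-i} ⊗ a_i b`,
whose descent to `V[g] = L(V,g)/DL(V,g)` is the Lie superbracket. -/
def mode0 (A : VOSA V) (f h : ℚ →₀ V) : ℚ →₀ V :=
  f.sum fun q a => h.sum fun q' b =>
    ∑ᶠ i : ℕ, ((qchoose q i : ℚ) : ℂ) • Finsupp.single (q + q' - (i : ℚ)) (A.Y a (i : ℤ) b)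

/-- The lift `o(a) = a(wt a - 1) = Σ_p t^{p-1} ⊗ (proj_p a)` of the map
`V^{0*} → V[g]_0`. -/
def oLift (A : VOSA V) (a : V) : ℚ →₀ V :=
  ∑ᶠ p : ℚ, Finsupp.single (p - 1) (projWt A p a)

/-- A module over the twisted Lie superalgebra `V[g]`: mode actions with the
correct support, truncation, vacuum normalization and the (super) commutator
formula, but without the full twisted Jacobi identity. -/
structure LieRep (A : VOSA V) (g : VOSA.Aut A) (T₀ : ℕ) (M : Type)
    [AddCommGroup M] [Module ℂ M] where
  act : V → ℚ → M →ₗ[ℂ] M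
  supp : ∀ (r : ℕ), r < T₀ → ∀ u ∈ eigSp g.g T₀ r, ∀ n : ℚ,
    (¬ ∃ m : ℤ, n = (m : ℚ) + (r : ℚ) / T₀) → act u n = 0
  trunc : ∀ (u : V) (w : M), ∃ N : ℚ, ∀ n ≥ N, act u n w = 0
  vac_act : ∀ n : ℚ, act A.vac n = if n = -1 then LinearMap.id else 0
  comm : ∀ (p q : ℚ) (u v : V), u ∈ A.wtSpace p → v ∈ A.wtSpace q →
    ∀ (m n : ℚ) (w : M),
      act u m (act v n w) - epsQ p q • act v n (act u m w) =
      ∑ᶠ i : ℕ, ((qchoose m i : ℚ) : ℂ) • act (A.Y u (i : ℤ) v) (m + n - (i : ℚ)) w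

/-- A submodule invariant under all `V[g]`-mode actions. -/
def LieRep.Invariant {A : VOSA V} {g : VOSA.Aut A} {T₀ : ℕ} {M : Type}
    [AddCommGroup M] [Module ℂ M] (W : LieRep A g T₀ M) (N : Submodule ℂ M) : Prop :=
  ∀ (u : V) (m : ℚ), ∀ w ∈ N, W.act u m w ∈ N

/-- Mode form of the twisted associativity relation
`(z₀+z₂)^K Y(a,z₀+z₂)Y(b,z₂)u = (z₂+z₀)^K Y(Y(a,z₀)b,z₂)u`. -/
def AssocRel (A : VOSA V) {g : VOSA.Aut A} {T₀ : ℕ} {M : Type}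
    [AddCommGroup M] [Module ℂ M] (W : LieRep A g T₀ M) (K : ℚ) (a b : V) (u : M) : Prop :=
  ∀ (d : ℤ) (ν : ℚ),
    ∑ᶠ i : ℕ, ((qchoose K i : ℚ) : ℂ) • W.act a (K + (d : ℚ) - (i : ℚ)) (W.act b ((i : ℚ) + ν) u) =
    ∑ᶠ i : ℕ, ((qchoose K i : ℚ) : ℂ) • W.act (A.Y a ((i : ℤ) + d) b) (K - (i : ℚ) + ν) u

section Lemmas

/-- The decomposition equivalence `V ≃ ⨁ V_q`. -/
noncomputable def decompE (A : VOSA V) : V ≃ₗ[ℂ] (⨁ q : ℚ, A.wtSpace q) :=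
  (LinearEquiv.ofBijective (DirectSum.coeLinearMap A.wtSpace) A.grading).symm

lemma projWt_apply (A : VOSA V) (p : ℚ) (x : V) :
    projWt A p x = (DirectSum.component ℂ ℚ (fun q => ↥(A.wtSpace q)) p (decompE A x) : V) := rfl

lemma projWt_mem (A : VOSA V) (p : ℚ) (x : V) : projWt A p x ∈ A.wtSpace p := by
  rw [projWt_apply]; exact SetLike.coe_mem _

lemma decompE_of_mem (A : VOSA V) {w : ℚ} {x : V} (hx : x ∈ A.wtSpace w) :
    decompE A x = DirectSum.of (fun q => ↥(A.wtSpace q)) w ⟨x, hx⟩ := by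
  rw [decompE, LinearEquiv.symm_apply_eq]
  exact (DirectSum.coeLinearMap_of (R := ℂ) A.wtSpace w ⟨x, hx⟩).symm

lemma projWt_of_mem (A : VOSA V) {w : ℚ} {x : V} (hx : x ∈ A.wtSpace w) (p : ℚ) :
    projWt A p x = if p = w then x else 0 := by
  rw [projWt_apply, decompE_of_mem A hx, ← DirectSum.lof_eq_of ℂ, DirectSum.component.of]
  rcases eq_or_ne p w with h | h
  · subst h; simp
  · rw [dif_neg (Ne.symm h), if_neg h]; rfl

lemma projWt_support_finite (A : VOSA V) (x : V) :
    (Function.support fun p => projWt A p x).Finite := by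
  apply Set.Finite.subset (DFinsupp.support (decompE A x)).finite_toSet
  intro p hp
  simp only [Function.mem_support, projWt_apply] at hp
  simp only [Finset.mem_coe, DFinsupp.mem_support_iff]
  intro h
  have h' : DirectSum.component ℂ ℚ (fun q => ↥(A.wtSpace q)) p (decompE A x) = 0 := h
  rw [h'] at hp
  exact hp rfl

lemma sum_projWt (A : VOSA V) (x : V) : ∑ᶠ p : ℚ, projWt A p x = x := by
  have h1 : DirectSum.coeLinearMap A.wtSpace (decompE A x) = x := by
    rw [decompE]
    exact (LinearEquiv.ofBijective (DirectSum.coeLinearMap A.wtSpace) A.grading).apply_symm_apply x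
  have h3 : ∑ᶠ p : ℚ, projWt A p x
      = ∑ p ∈ (DFinsupp.support (decompE A x)), projWt A p x := by
    apply finsum_eq_sum_of_support_subset
    intro p hp
    simp only [Function.mem_support, projWt_apply] at hp
    simp only [Finset.mem_coe, DFinsupp.mem_support_iff]
    intro h
    have h' : DirectSum.component ℂ ℚ (fun q => ↥(A.wtSpace q)) p (decompE A x) = 0 := h
    rw [h'] at hp
    exact hp rfl
  rw [h3]
  conv_rhs => rw [← h1, ← DirectSum.sum_support_of (decompE A x), map_sum]
  refine Finset.sum_congr rfl fun p _ => ?_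
  rw [DirectSum.coeLinearMap_of]
  rfl

end Lemmas
section Lemmas2

lemma mem_wtSpace_of_L0 (A : VOSA V) {p : ℚ} {x : V} (h : A.Y A.ω 1 x = ((p : ℚ) : ℂ) • x) :
    x ∈ A.wtSpace p := by
  classical
  set d : ℚ → V := fun q => projWt A q x with hd
  have hfin : (Function.support d).Finite := projWt_support_finite A x
  have key : ∀ r : ℚ, projWt A r (A.Y A.ω 1 x) = ((r : ℚ) : ℂ) • d r := by
    intro r
    have hx : x = ∑ᶠ q : ℚ, d q := (sum_projWt A x).symm
    have h1 : A.Y A.ω 1 x = ∑ᶠ q : ℚ, A.Y A.ω 1 (d q) := by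
      conv_lhs => rw [hx]
      exact (A.Y A.ω 1).toAddMonoidHom.map_finsum hfin
    have h2 : ∀ q : ℚ, A.Y A.ω 1 (d q) = ((q : ℚ) : ℂ) • d q := fun q =>
      A.L0_grading q (d q) (projWt_mem A q x)
    rw [h1, finsum_congr h2]
    have h3 : (projWt A r) (∑ᶠ q : ℚ, ((q:ℚ):ℂ) • d q) = ∑ᶠ q : ℚ, projWt A r (((q:ℚ):ℂ) • d q) := by
      apply (projWt A r).toAddMonoidHom.map_finsum
      apply Set.Finite.subset hfin
      intro q hq
      simp only [Function.mem_support] at hq ⊢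
      intro h0; rw [h0, smul_zero] at hq; exact hq rfl
    rw [h3]
    have h4 : ∀ q : ℚ, q ≠ r → projWt A r (((q:ℚ):ℂ) • d q) = 0 := by
      intro q hq
      have : ((q:ℚ):ℂ) • d q ∈ A.wtSpace q := Submodule.smul_mem _ _ (projWt_mem A q x)
      rw [projWt_of_mem A this, if_neg (Ne.symm hq)]
    rw [finsum_eq_single _ r h4]
    have : ((r:ℚ):ℂ) • d r ∈ A.wtSpace r := Submodule.smul_mem _ _ (projWt_mem A r x)
    rw [map_smul]
    congr 1
    rw [hd]
    simp only []
    rw [projWt_of_mem A (projWt_mem A r x), if_pos rfl]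
  have key2 : ∀ r : ℚ, r ≠ p → d r = 0 := by
    intro r hr
    have h5 : projWt A r (A.Y A.ω 1 x) = ((p:ℚ):ℂ) • d r := by
      rw [h, map_smul]
    have h6 := key r
    rw [h5] at h6
    have h7 : (((p:ℚ):ℂ) - ((r:ℚ):ℂ)) • d r = 0 := by
      rw [sub_smul, h6, sub_self]
    rcases smul_eq_zero.mp h7 with h8 | h8
    · exfalso
      apply hr
      have : ((r:ℚ):ℂ) = ((p:ℚ):ℂ) := by linear_combination -h8
      exact_mod_cast this
    · exact h8
  have hx : x = d p := by
    rw [← sum_projWt A x]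
    exact finsum_eq_single _ p key2
  rw [hx]
  exact projWt_mem A p x

lemma VOSA.Aut.map_wt (A : VOSA V) (e : A.Aut) {p : ℚ} {x : V} (hx : x ∈ A.wtSpace p) :
    e.g x ∈ A.wtSpace p := by
  apply mem_wtSpace_of_L0 A
  have h1 : e.g (A.Y A.ω 1 x) = A.Y A.ω 1 (e.g x) := by
    rw [e.equivariant, e.fix_omega]
  rw [← h1, A.L0_grading p x hx, map_smul]

lemma projWt_comm_shift (A : VOSA V) (φ : V →ₗ[ℂ] V) (c : ℚ)
    (hφ : ∀ (q : ℚ) (y : V), y ∈ A.wtSpace q → φ y ∈ A.wtSpace (q + c)) (p : ℚ) (x : V) :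
    projWt A (p + c) (φ x) = φ (projWt A p x) := by
  have hfin : (Function.support fun q => projWt A q x).Finite := projWt_support_finite A x
  have h1 : φ x = ∑ᶠ q : ℚ, φ (projWt A q x) := by
    conv_lhs => rw [← sum_projWt A x]
    exact φ.toAddMonoidHom.map_finsum hfin
  have hfin2 : (Function.support fun q => φ (projWt A q x)).Finite := by
    apply hfin.subset; intro q hq
    simp only [Function.mem_support] at hq ⊢
    intro h0; rw [h0, map_zero] at hq; exact hq rfl
  have h5 : (projWt A (p + c)) (∑ᶠ q : ℚ, φ (projWt A q x))
      = ∑ᶠ q : ℚ, projWt A (p + c) (φ (projWt A q x)) :=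
    (projWt A (p + c)).toAddMonoidHom.map_finsum hfin2
  rw [h1, h5]
  have h4 : ∀ q : ℚ, q ≠ p → projWt A (p + c) (φ (projWt A q x)) = 0 := by
    intro q hq
    rw [projWt_of_mem A (hφ q _ (projWt_mem A q x)), if_neg]
    intro h; exact hq (add_right_cancel h).symm
  rw [finsum_eq_single _ p h4, projWt_of_mem A (hφ p _ (projWt_mem A p x)), if_pos rfl]

lemma projWt_comm_aut (A : VOSA V) (e : A.Aut) (p : ℚ) (x : V) :
    projWt A p (e.g x) = e.g (projWt A p x) := by
  have hphi : ∀ (q : ℚ) (y : V), y ∈ A.wtSpace q → e.g.toLinearMap y ∈ A.wtSpace (q + 0) := by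
    intro q y hy; rw [add_zero]; exact VOSA.Aut.map_wt A e hy
  have := projWt_comm_shift A e.g.toLinearMap 0 hphi p x
  rwa [add_zero] at this

lemma projWt_comm_Lm1 (A : VOSA V) (p : ℚ) (x : V) :
    projWt A (p + 1) (A.Y A.ω 0 x) = A.Y A.ω 0 (projWt A p x) := by
  apply projWt_comm_shift
  intro q y hy
  have := A.mode_wt 2 q A.ω y 0 A.omega_wt hy
  have he : (2 : ℚ) + q - ((0:ℤ) : ℚ) - 1 = q + 1 := by push_cast; ring
  rwa [he] at this

end Lemmas2
section Lemmas3

lemma exp_zero_eig (T : ℕ) : Complex.exp (2 * Real.pi * Complex.I * ((0:ℕ):ℂ) / T) = 1 := by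
  norm_num [Complex.exp_zero]

lemma mem_eigSp_iff {f : V ≃ₗ[ℂ] V} {T r : ℕ} {x : V} :
    x ∈ eigSp f T r ↔ f x = Complex.exp (2 * Real.pi * Complex.I * r / T) • x :=
  Module.End.mem_eigenspace_iff

lemma mem_eigSp_zero_iff {f : V ≃ₗ[ℂ] V} {T : ℕ} {x : V} :
    x ∈ eigSp f T 0 ↔ f x = x := by
  rw [mem_eigSp_iff, exp_zero_eig, one_smul]

lemma exp_half_eig {T₀ r : ℕ} (h : T₀ = 2 * r) (hr : r ≠ 0) :
    Complex.exp (2 * Real.pi * Complex.I * r / T₀) = -1 := by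
  have hrc : ((r:ℕ):ℂ) ≠ 0 := Nat.cast_ne_zero.mpr hr
  have harg : 2 * (Real.pi:ℂ) * Complex.I * r / T₀ = Real.pi * Complex.I := by
    rw [h]
    push_cast
    field_simp
  rw [harg, Complex.exp_pi_mul_I]

lemma wt_le_even (A : VOSA V) (n : ℤ) : A.wtSpace ((n:ℤ):ℚ) ≤ A.evenPart :=
  le_iSup (fun m : ℤ => A.wtSpace ((m:ℤ):ℚ)) n

lemma wt_le_odd (A : VOSA V) (n : ℤ) : A.wtSpace (((n:ℤ):ℚ) + 1/2) ≤ A.oddPart :=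
  le_iSup (fun m : ℤ => A.wtSpace (((m:ℤ):ℚ) + 1/2)) n

/-- A nonzero vector of weight `w` has `w` integral or half-integral. -/
lemma wt_int_or_half (A : VOSA V) {w : ℚ} {x : V} (hx : x ∈ A.wtSpace w) (hx0 : x ≠ 0) :
    (∃ k : ℤ, w = (k:ℚ)) ∨ (∃ k : ℤ, w = (k:ℚ) + 1/2) := by
  have hne : A.wtSpace w ≠ ⊥ := by
    intro h; rw [h, Submodule.mem_bot] at hx; exact hx0 hx
  obtain ⟨m, hm⟩ := A.halfInt w hne
  rcases Int.even_or_odd m with ⟨k, hk⟩ | ⟨k, hk⟩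
  · left; exact ⟨k, by rw [hm, hk]; push_cast; ring⟩
  · right; exact ⟨k, by rw [hm, hk]; push_cast; ring⟩

/-- Key fixing lemma: a homogeneous `g`-eigenvector whose weight is congruent to
`r/T₀` mod `ℤ` is fixed by `gσ`. -/
lemma sigma_fix (A : VOSA V) (g s : VOSA.Aut A) (hs : A.IsParityAut s)
    (T₀ T : ℕ) (h0 : 0 < T₀) {w : ℚ} {x : V} {r : ℕ} (hr : r < T₀)
    (hx : x ∈ A.wtSpace w) (heig : x ∈ eigSp g.g T₀ r)
    (ha : ∃ a : ℤ, w = (a:ℚ) + (r:ℚ)/T₀) :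
    x ∈ eigSp (g.g.trans s.g) T 0 := by
  rcases eq_or_ne x 0 with rfl | hx0
  · exact Submodule.zero_mem _
  obtain ⟨a, haw⟩ := ha
  have hT₀Q : (0:ℚ) < (T₀:ℚ) := by exact_mod_cast h0
  have hb1 : (0:ℚ) ≤ (r:ℚ)/T₀ := by positivity
  have hb2 : (r:ℚ)/T₀ < 1 := by
    rw [div_lt_one hT₀Q]; exact_mod_cast hr
  rw [mem_eigSp_zero_iff]
  rcases wt_int_or_half A hx hx0 with ⟨k, hk⟩ | ⟨k, hk⟩
  · -- integer weight: r = 0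
    have hz : (r:ℚ)/T₀ = ((k - a : ℤ):ℚ) := by push_cast; linarith [haw, hk]
    have hz0 : ((k - a : ℤ):ℚ) = 0 := by
      have h1 : (0:ℚ) ≤ ((k-a:ℤ):ℚ) := hz ▸ hb1
      have h2 : ((k-a:ℤ):ℚ) < 1 := hz ▸ hb2
      have h1' : (0:ℤ) ≤ k - a := by exact_mod_cast h1
      have h2' : (k - a : ℤ) < 1 := by exact_mod_cast h2
      have : k - a = 0 := by omega
      rw [this]; norm_num
    have hr0 : r = 0 := by
      have : (r:ℚ) = 0 := by
        have := hz.trans hz0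
        field_simp at this
        exact_mod_cast this
      exact_mod_cast this
    subst hr0
    have hgx : g.g x = x := by
      have := mem_eigSp_iff.mp heig
      rwa [exp_zero_eig, one_smul] at this
    have hsx : s.g (g.g x) = g.g x := by
      apply hs.1
      apply wt_le_even A k
      rw [← hk]
      exact VOSA.Aut.map_wt A g hx
    show s.g (g.g x) = x
    rw [hsx, hgx]
  · -- half-integer weight: r/T₀ = 1/2
    have hz : (r:ℚ)/T₀ - 1/2 = ((k - a : ℤ):ℚ) := by push_cast; linarith [haw, hk]
    have hz0 : ((k - a : ℤ):ℚ) = 0 := by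
      have h1 : (-1:ℚ) < ((k-a:ℤ):ℚ) := by rw [← hz]; linarith
      have h2 : ((k-a:ℤ):ℚ) < 1 := by rw [← hz]; linarith
      have h1' : (-1:ℤ) < k - a := by exact_mod_cast h1
      have h2' : (k - a : ℤ) < 1 := by exact_mod_cast h2
      have : k - a = 0 := by omega
      rw [this]; norm_num
    have hhalf : (r:ℚ)/T₀ = 1/2 := by
      have := hz.trans hz0
      linarith
    have h2r : T₀ = 2 * r := by
      have : 2 * (r:ℚ) = (T₀:ℚ) := by
        field_simp at hhalf
        linarith
      exact_mod_cast this.symm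
    have hrne : r ≠ 0 := by
      intro h; rw [h] at h2r; omega
    have hgx : g.g x = -x := by
      have := mem_eigSp_iff.mp heig
      rwa [exp_half_eig h2r hrne, neg_one_smul] at this
    have hsx : s.g (g.g x) = -(g.g x) := by
      apply hs.2
      apply wt_le_odd A k
      rw [show ((k:ℤ):ℚ) + 1/2 = w from hk.symm]
      exact VOSA.Aut.map_wt A g hx
    show s.g (g.g x) = x
    rw [hsx, hgx, neg_neg]

lemma aut_pow_eig {x : V} (f : V ≃ₗ[ℂ] V) (hf : f x = -x) (n : ℕ) :
    (f ^ n) x = ((-1:ℂ) ^ n) • x := by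
  induction n with
  | zero => simp
  | succ n ih =>
    rw [pow_succ]
    show (f ^ n) (f x) = _
    rw [hf, map_neg, ih, pow_succ, mul_neg_one, neg_smul]

/-- Converse: a homogeneous `gσ`-fixed vector is a `g`-eigenvector with the right
congruence. -/
lemma eig_of_fix (A : VOSA V) (g s : VOSA.Aut A) (hs : A.IsParityAut s)
    (T₀ T : ℕ) (hT₀ : orderOf g.g = T₀) (h0 : 0 < T₀) {w : ℚ} {x : V}
    (hx : x ∈ A.wtSpace w) (hfix : x ∈ eigSp (g.g.trans s.g) T 0) (hx0 : x ≠ 0) :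
    ∃ r : ℕ, r < T₀ ∧ (∃ a : ℤ, w = (a:ℚ) + (r:ℚ)/T₀) ∧ x ∈ eigSp g.g T₀ r := by
  have hsig : s.g (g.g x) = x := mem_eigSp_zero_iff.mp hfix
  have hgwt : g.g x ∈ A.wtSpace w := VOSA.Aut.map_wt A g hx
  rcases wt_int_or_half A hx hx0 with ⟨k, hk⟩ | ⟨k, hk⟩
  · refine ⟨0, h0, ⟨k, by rw [hk]; norm_num⟩, ?_⟩
    rw [mem_eigSp_iff, exp_zero_eig, one_smul]
    have := hs.1 (g.g x) (wt_le_even A k (by rw [← hk]; exact hgwt))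
    rw [this] at hsig
    exact hsig
  · have hgx : g.g x = -x := by
      have h' := hs.2 (g.g x) (wt_le_odd A k (by rw [show ((k:ℤ):ℚ) + 1/2 = w from hk.symm]; exact hgwt))
      rw [h'] at hsig
      exact neg_eq_iff_eq_neg.mp hsig
    have hpow : (g.g ^ T₀) x = x := by
      have h1 : g.g ^ T₀ = 1 := by rw [← hT₀]; exact pow_orderOf_eq_one g.g
      rw [h1]; rfl
    have hval : ((-1:ℂ) ^ T₀) • x = x := by rw [← aut_pow_eig g.g hgx T₀]; exact hpow
    rcases Nat.even_or_odd T₀ with ⟨r, h2r⟩ | hodd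
    · have h2r' : T₀ = 2 * r := by omega
      have hrne : r ≠ 0 := by omega
      refine ⟨r, by omega, ⟨k, ?_⟩, ?_⟩
      · have hTQ : (T₀:ℚ) = 2 * (r:ℚ) := by exact_mod_cast h2r'
        have hrQ : (r:ℚ) ≠ 0 := Nat.cast_ne_zero.mpr hrne
        rw [hk, hTQ]
        field_simp
      · rw [mem_eigSp_iff, exp_half_eig h2r' hrne, neg_one_smul]
        exact hgx
    · exfalso
      rw [hodd.neg_one_pow, neg_one_smul] at hval
      have h2 : (2:ℂ) • x = 0 := by
        rw [two_smul]
        nth_rewrite 1 [← hval]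
        exact neg_add_cancel x
      rcases smul_eq_zero.mp h2 with h | h
      · norm_num at h
      · exact hx0 h

end Lemmas3
section Lemmas4

lemma oLift_support_finite (A : VOSA V) (x : V) :
    (Function.support fun p : ℚ => Finsupp.single (p - 1) (projWt A p x)).Finite := by
  apply (projWt_support_finite A x).subset
  intro p hp
  simp only [Function.mem_support] at hp ⊢
  intro h; rw [h, Finsupp.single_zero] at hp; exact hp rfl

/-- `oLift` as a linear map. -/
noncomputable def oLiftL (A : VOSA V) : V →ₗ[ℂ] (ℚ →₀ V) where
  toFun := oLift A
  map_add' x y := by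
    unfold oLift
    have h : ∀ p : ℚ, Finsupp.single (p - 1) (projWt A p (x + y))
        = Finsupp.single (p - 1) (projWt A p x) + Finsupp.single (p - 1) (projWt A p y) :=
      fun p => by rw [map_add, Finsupp.single_add]
    rw [finsum_congr h, finsum_add_distrib (oLift_support_finite A x) (oLift_support_finite A y)]
  map_smul' c x := by
    unfold oLift
    simp only [RingHom.id_apply]
    have h : ∀ p : ℚ, Finsupp.single (p - 1) (projWt A p (c • x))
        = c • Finsupp.single (p - 1) (projWt A p x) :=
      fun p => by rw [map_smul, Finsupp.smul_single]
    rw [finsum_congr h, ← smul_finsum' c (oLift_support_finite A x)]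

lemma oLiftL_apply (A : VOSA V) (x : V) : oLiftL A x = oLift A x := rfl

lemma oLift_homog (A : VOSA V) {w : ℚ} {x : V} (hx : x ∈ A.wtSpace w) :
    oLift A x = Finsupp.single (w - 1) x := by
  unfold oLift
  rw [finsum_eq_single _ w
    (fun p hp => by rw [projWt_of_mem A hx, if_neg hp, Finsupp.single_zero]),
    projWt_of_mem A hx, if_pos rfl]

lemma oLift_eval (A : VOSA V) (x : V) (p : ℚ) : (oLift A x) (p - 1) = projWt A p x := by
  unfold oLift
  have h := (Finsupp.applyAddHom (M := V) (p - 1) : (ℚ →₀ V) →+ V).map_finsum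
    (oLift_support_finite A x)
  rw [show (∑ᶠ q : ℚ, Finsupp.single (q - 1) (projWt A q x)) (p - 1) = _ from h]
  have h4 : ∀ q : ℚ, q ≠ p →
      (Finsupp.applyAddHom (M := V) (p - 1)) (Finsupp.single (q - 1) (projWt A q x)) = 0 := by
    intro q hq
    simp only [Finsupp.applyAddHom_apply]
    rw [Finsupp.single_apply, if_neg (by intro h'; exact hq (by linarith))]
  rw [finsum_eq_single _ p h4]
  simp

lemma oLift_inj (A : VOSA V) {x y : V} (h : oLift A x = oLift A y) : x = y := by
  have hp : ∀ p : ℚ, projWt A p x = projWt A p y := fun p => by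
    rw [← oLift_eval, h, oLift_eval]
  rw [← sum_projWt A x, ← sum_projWt A y]
  exact finsum_congr hp

/-- Degree-zero projection on `L(V)`. -/
noncomputable def P0map (A : VOSA V) : (ℚ →₀ V) →ₗ[ℂ] (ℚ →₀ V) :=
  Finsupp.lsum ℂ fun q => (Finsupp.lsingle q).comp (projWt A (q + 1))

/-- Sum of weight-`q` parts of components: the "`b`" extraction map. -/
noncomputable def Emap (A : VOSA V) : (ℚ →₀ V) →ₗ[ℂ] V :=
  Finsupp.lsum ℂ fun q => projWt A q

/-- `Dop` as a linear map. -/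
noncomputable def DopL (A : VOSA V) : (ℚ →₀ V) →ₗ[ℂ] (ℚ →₀ V) :=
  Finsupp.lsum ℂ fun q =>
    ((q : ℂ) • Finsupp.lsingle (q - 1) : V →ₗ[ℂ] (ℚ →₀ V)) + (Finsupp.lsingle q).comp (A.Y A.ω 0)

lemma DopL_eq (A : VOSA V) (f : ℚ →₀ V) : Dop A f = DopL A f := rfl

lemma P0map_single (A : VOSA V) (q : ℚ) (a : V) :
    P0map A (Finsupp.single q a) = Finsupp.single q (projWt A (q + 1) a) := by
  simp [P0map]

lemma Emap_single (A : VOSA V) (q : ℚ) (a : V) :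
    Emap A (Finsupp.single q a) = projWt A q a := by
  simp [Emap]

lemma DopL_single (A : VOSA V) (q : ℚ) (a : V) :
    DopL A (Finsupp.single q a) = (q : ℂ) • Finsupp.single (q - 1) a
      + Finsupp.single q (A.Y A.ω 0 a) := by
  simp [DopL]

end Lemmas4
section Lemmas5

lemma Y_zero_nonneg (A : VOSA V) (y : V) (m : ℤ) (hm : 0 ≤ m) : A.Y (0 : V) m y = 0 := by
  obtain ⟨N, hN⟩ := A.trunc 0 y
  have hrec : ∀ n : ℤ, A.Y (0 : V) n y = (-(n : ℂ)) • A.Y (0 : V) (n - 1) y := by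
    intro n
    have h := A.translation (0 : V) n
    rw [map_zero] at h
    rw [h]
    rfl
  have key : ∀ (k : ℕ) (m : ℤ), 0 ≤ m → N ≤ m + k → A.Y (0 : V) m y = 0 := by
    intro k
    induction k with
    | zero =>
      intro m _ h
      exact hN m (by omega)
    | succ k ih =>
      intro m hm h
      by_cases hc : N ≤ m + k
      · exact ih m hm hc
      · have h2 : A.Y (0 : V) (m + 1) y = 0 := ih (m + 1) (by omega) (by omega)
        have h1 := hrec (m + 1)
        rw [h2, show (m : ℤ) + 1 - 1 = m from by ring] at h1
        rcases smul_eq_zero.mp h1.symm with h3 | h3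
        · exfalso
          have : ((m : ℂ) + 1) = 0 := by
            have := neg_eq_zero.mp h3
            push_cast at this ⊢
            exact_mod_cast this
          have : ((m + 1 : ℤ) : ℂ) = 0 := by push_cast; linear_combination this
          have hm1 : (m + 1 : ℤ) = 0 := by exact_mod_cast this
          omega
        · exact h3
  obtain ⟨k, hk⟩ : ∃ k : ℕ, N ≤ m + k := ⟨(N - m).toNat, by omega⟩
  exact key k m hm hk

lemma Lm1_wt (A : VOSA V) {p : ℚ} {x : V} (hx : x ∈ A.wtSpace p) :
    A.Y A.ω 0 x ∈ A.wtSpace (p + 1) := by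
  have h := A.mode_wt 2 p A.ω x 0 A.omega_wt hx
  have he : (2 : ℚ) + p - ((0 : ℤ) : ℚ) - 1 = p + 1 := by push_cast; ring
  rwa [he] at h

lemma oLift_LmL0_homog (A : VOSA V) (p : ℚ) (x : V) (hx : x ∈ A.wtSpace p) :
    oLiftL A ((A.Lm1 + A.L0) x)
      = (p : ℂ) • Finsupp.single (p - 1) x + Finsupp.single p (A.Y A.ω 0 x) := by
  have happ : (A.Lm1 + A.L0) x = A.Y A.ω 0 x + A.Y A.ω 1 x := rfl
  rw [happ, map_add]
  have h1 : oLiftL A (A.Y A.ω 0 x) = Finsupp.single p (A.Y A.ω 0 x) := by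
    rw [oLiftL_apply, oLift_homog A (Lm1_wt A hx), show p + 1 - 1 = p from by ring]
  have h2 : oLiftL A (A.Y A.ω 1 x) = (p : ℂ) • Finsupp.single (p - 1) x := by
    rw [A.L0_grading p x hx, map_smul, oLiftL_apply, oLift_homog A hx, Finsupp.smul_single]
  rw [h1, h2, add_comm]

lemma key_single (A : VOSA V) (q : ℚ) (aq : V) :
    P0map A (DopL A (Finsupp.single q aq))
      = oLiftL A ((A.Lm1 + A.L0) (Emap A (Finsupp.single q aq))) := by
  rw [DopL_single, Emap_single, map_add, map_smul, P0map_single, P0map_single,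
    oLift_LmL0_homog A q _ (projWt_mem A q aq),
    show q - 1 + 1 = q from by ring, projWt_comm_Lm1 A q aq]

lemma key_all (A : VOSA V) (f : ℚ →₀ V) :
    P0map A (DopL A f) = oLiftL A ((A.Lm1 + A.L0) (Emap A f)) := by
  induction f using Finsupp.induction_linear with
  | zero => simp
  | add f h hf hh => simp only [map_add, hf, hh]
  | single q aq => exact key_single A q aq

lemma P0map_oLift (A : VOSA V) (a : V) : P0map A (oLift A a) = oLift A a := by
  unfold oLift
  have h := (P0map A).toAddMonoidHom.map_finsum (oLift_support_finite A a)
  rw [show P0map A (∑ᶠ p : ℚ, Finsupp.single (p - 1) (projWt A p a)) = _ from h]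
  refine finsum_congr fun p => ?_
  show P0map A (Finsupp.single (p - 1) (projWt A p a)) = _
  rw [P0map_single, show p - 1 + 1 = p from by ring,
    projWt_of_mem A (projWt_mem A p a), if_pos rfl]

end Lemmas5
/-- The degree-zero part `V[g]_0` is spanned (mod `D L(V,g)`) by the
elements `o(a) = a(wt a - 1)` for homogeneous `a ∈ V^{0*}`; the kernel of
`a ↦ o(a)` on `V^{0*}` is `(L(-1)+L(0))V^{0*}`; and the induced bracket is
`[a,b] = Σ_j C(wt a - 1, j) a_j b`. -/
theorem stmt10 (A : VOSA V) (g s : VOSA.Aut A) (hs : A.IsParityAut s)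
    (T₀ T : ℕ) (hT₀ : orderOf g.g = T₀) (hT : orderOf (g.g.trans s.g) = T)
    (h0 : 0 < T₀) (h1 : 0 < T) :
    (∀ f ∈ LVgSet A g T₀, (∀ q : ℚ, f q ∈ A.wtSpace (q + 1)) →
      ∃ x ∈ Submodule.span ℂ {y : ℚ →₀ V | ∃ (p : ℚ) (a : V),
          a ∈ eigSp (g.g.trans s.g) T 0 ∧ a ∈ A.wtSpace p ∧
          y = Finsupp.single (p - 1) a},
        f - x ∈ DLsub A g T₀) ∧
    (∀ a ∈ eigSp (g.g.trans s.g) T 0,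
      (oLift A a ∈ DLsub A g T₀ ↔
        a ∈ Submodule.map (A.Lm1 + A.L0) (eigSp (g.g.trans s.g) T 0))) ∧
    (∀ (p q : ℚ) (a b : V), a ∈ eigSp (g.g.trans s.g) T 0 → a ∈ A.wtSpace p →
      b ∈ eigSp (g.g.trans s.g) T 0 → b ∈ A.wtSpace q →
      mode0 A (Finsupp.single (p - 1) a) (Finsupp.single (q - 1) b)
        - oLift A (∑ᶠ j : ℕ, ((qchoose (p - 1) j : ℚ) : ℂ) • A.Y a (j : ℤ) b)
        ∈ DLsub A g T₀) := by
  refine ⟨?_, ?_, ?_⟩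
  · -- Part 1
    intro f hf hwt
    refine ⟨f, ?_, by rw [sub_self]; exact Submodule.zero_mem _⟩
    have hdecomp : f = ∑ q ∈ f.support, Finsupp.single q (f q) := (Finsupp.sum_single f).symm
    rw [hdecomp]
    apply Submodule.sum_mem
    intro q hq
    apply Submodule.subset_span
    refine ⟨q + 1, f q, ?_, hwt q, by rw [show q + 1 - 1 = q from by ring]⟩
    have hfq : f q ≠ 0 := Finsupp.mem_support_iff.mp hq
    obtain ⟨az, r, hr, hm, heig⟩ := hf q hfq
    exact sigma_fix A g s hs T₀ T h0 hr (hwt q) heig ⟨az + 1, by rw [hm]; push_cast; ring⟩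
  · -- Part 2
    intro a _
    constructor
    · -- forward direction
      intro hin
      set W : Submodule ℂ (ℚ →₀ V) := Submodule.comap (P0map A)
        (Submodule.map ((oLiftL A).comp (A.Lm1 + A.L0)) (eigSp (g.g.trans s.g) T 0)) with hW
      have hgen : Dop A '' LVgSet A g T₀ ⊆ ↑W := by
        rintro y ⟨f, hf, rfl⟩
        have hEf : Emap A f ∈ eigSp (g.g.trans s.g) T 0 := by
          have hE : Emap A f = ∑ q ∈ f.support, projWt A q (f q) := rfl
          rw [hE]
          apply Submodule.sum_mem
          intro q hq
          have hfq : f q ≠ 0 := Finsupp.mem_support_iff.mp hq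
          obtain ⟨az, r, hr, hqe, heig⟩ := hf q hfq
          refine sigma_fix A g s hs T₀ T h0 hr (projWt_mem A q (f q)) ?_ ⟨az, hqe⟩
          rw [mem_eigSp_iff, ← projWt_comm_aut A g q (f q), mem_eigSp_iff.mp heig, map_smul]
        show Dop A f ∈ W
        rw [hW, Submodule.mem_comap, DopL_eq, key_all A f]
        exact Submodule.mem_map_of_mem hEf
      have hWin : oLift A a ∈ W := Submodule.span_le.mpr hgen hin
      rw [hW, Submodule.mem_comap, P0map_oLift] at hWin
      obtain ⟨b, hbmem, hbeq⟩ := hWin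
      refine ⟨b, hbmem, ?_⟩
      exact oLift_inj A (by rw [← oLiftL_apply]; exact hbeq)
    · -- reverse direction
      rintro ⟨b, hb, rfl⟩
      have hfin : (Function.support fun p : ℚ => projWt A p b).Finite := projWt_support_finite A b
      have hσb : s.g (g.g b) = b := by
        have := mem_eigSp_zero_iff.mp hb
        rwa [LinearEquiv.trans_apply] at this
      have hfin2 : (Function.support fun p : ℚ =>
          Dop A (Finsupp.single p (projWt A p b))).Finite := by
        apply hfin.subset
        intro p hp
        simp only [Function.mem_support] at hp ⊢
        intro h
        rw [h, Finsupp.single_zero] at hp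
        apply hp
        rw [DopL_eq, map_zero]
      have heq : oLift A ((A.Lm1 + A.L0) b)
          = ∑ᶠ p : ℚ, Dop A (Finsupp.single p (projWt A p b)) := by
        have hb' : (A.Lm1 + A.L0) b = ∑ᶠ p : ℚ, (A.Lm1 + A.L0) (projWt A p b) := by
          conv_lhs => rw [← sum_projWt A b]
          exact (A.Lm1 + A.L0).toAddMonoidHom.map_finsum hfin
        have hfin3 : (Function.support fun p : ℚ => (A.Lm1 + A.L0) (projWt A p b)).Finite := by
          apply hfin.subset
          intro p hp
          simp only [Function.mem_support] at hp ⊢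
          intro h; rw [h, map_zero] at hp; exact hp rfl
        rw [← oLiftL_apply, hb']
        have h4 := (oLiftL A).toAddMonoidHom.map_finsum hfin3
        rw [show oLiftL A (∑ᶠ p : ℚ, (A.Lm1 + A.L0) (projWt A p b)) = _ from h4]
        refine finsum_congr fun p => ?_
        show oLiftL A ((A.Lm1 + A.L0) (projWt A p b)) = _
        rw [oLift_LmL0_homog A p _ (projWt_mem A p b), DopL_eq, DopL_single, add_comm]
      rw [heq, finsum_eq_sum_of_support_subset _ (Set.Finite.coe_toFinset hfin2).symm.subset]
      apply Submodule.sum_mem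
      intro p _
      apply Submodule.subset_span
      refine ⟨Finsupp.single p (projWt A p b), ?_, rfl⟩
      intro m hm
      rw [Finsupp.single_apply] at hm
      by_cases hpm : p = m
      · subst hpm
        rw [if_pos rfl] at hm
        have hfixd : projWt A p b ∈ eigSp (g.g.trans s.g) T 0 := by
          rw [mem_eigSp_zero_iff, LinearEquiv.trans_apply, ← projWt_comm_aut A g p b,
            ← projWt_comm_aut A s p (g.g b), hσb]
        obtain ⟨r, hr, ⟨a', ha'⟩, heig⟩ :=
          eig_of_fix A g s hs T₀ T hT₀ h0 (projWt_mem A p b) hfixd hm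
        refine ⟨a', r, hr, ha', ?_⟩
        rwa [Finsupp.single_eq_same]
      · exact absurd (if_neg hpm) (by rw [ne_eq] at hm; intro h; exact hm h)
  · -- Part 3
    intro p q a b _ hap _ hbq
    set c : ℕ → ℂ := fun j => ((qchoose (p - 1) j : ℚ) : ℂ) with hc
    have hYwt : ∀ j : ℕ, A.Y a (j : ℤ) b ∈ A.wtSpace (p + q - ((j : ℤ) : ℚ) - 1) :=
      fun j => A.mode_wt p q a b (j : ℤ) hap hbq
    obtain ⟨N, hN⟩ := A.trunc a b
    have hsupfin : (Function.support fun j : ℕ => c j • A.Y a (j : ℤ) b).Finite := by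
      apply (Set.finite_Iio N.toNat).subset
      intro j hj
      simp only [Function.mem_support] at hj
      simp only [Set.mem_Iio]
      by_contra hcon
      push_neg at hcon
      have : A.Y a (j : ℤ) b = 0 := hN (j : ℤ) (by omega)
      rw [this, smul_zero] at hj
      exact hj rfl
    have hm0 : mode0 A (Finsupp.single (p - 1) a) (Finsupp.single (q - 1) b)
        = ∑ᶠ i : ℕ, c i • Finsupp.single ((p - 1) + (q - 1) - (i : ℚ)) (A.Y a (i : ℤ) b) := by
      unfold mode0
      rw [Finsupp.sum_single_index, Finsupp.sum_single_index]
      · refine finsum_eq_zero_of_forall_eq_zero fun i => ?_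
        rw [map_zero, Finsupp.single_zero, smul_zero]
      · rw [Finsupp.sum]
        apply Finset.sum_eq_zero
        intro q'' _
        refine finsum_eq_zero_of_forall_eq_zero fun i => ?_
        rw [Y_zero_nonneg A _ (i : ℤ) (by positivity), Finsupp.single_zero, smul_zero]
    have ho : oLift A (∑ᶠ j : ℕ, c j • A.Y a (j : ℤ) b)
        = ∑ᶠ j : ℕ, c j • Finsupp.single (p + q - ((j : ℤ) : ℚ) - 1 - 1) (A.Y a (j : ℤ) b) := by
      rw [← oLiftL_apply]
      have h4 := (oLiftL A).toAddMonoidHom.map_finsum hsupfin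
      rw [show oLiftL A (∑ᶠ j : ℕ, c j • A.Y a (j : ℤ) b) = _ from h4]
      refine finsum_congr fun j => ?_
      show oLiftL A (c j • A.Y a (j : ℤ) b) = _
      rw [map_smul, oLiftL_apply, oLift_homog A (hYwt j)]
    have hfinal : mode0 A (Finsupp.single (p - 1) a) (Finsupp.single (q - 1) b)
        = oLift A (∑ᶠ j : ℕ, c j • A.Y a (j : ℤ) b) := by
      rw [hm0, ho]
      refine finsum_congr fun j => ?_
      rw [show (p - 1) + (q - 1) - (j : ℚ) = p + q - ((j : ℤ) : ℚ) - 1 - 1 from by push_cast; ring]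
    rw [hfinal, sub_self]
    exact Submodule.zero_mem _
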